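/- For fixed r > 1, lim_{N→∞} (N/2 + 1)^{−2r/N} · B_{(N,r)}^{−2r/N} = r (1 − 1/r)^{1−r}, where B_{(N,r)} = ∫₀¹ t^{(N/(2r))(r−1)} (1−t)^{N/(2r)} dt. -/

import Mathlib

open Filter

theorem expansion_opta_limit (r : ℝ) (hr : 1 < r) :
    Tendsto (fun N : ℝ =>
        (N / 2 + 1) ^ (-(2 * r) / N) *
        (∫ t in (0:ℝ)..1, t ^ (N / (2 * r) * (r - 1)) * (1 - t) ^ (N / (2 * r)))
          ^ (-(2 * r) / N))
      atTop (nhds (r * (1 - 1 / r) ^ (1 - r))) := by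
  have hr0 : (0:ℝ) < r := lt_trans one_pos hr
  set w1 : ℝ := (r - 1) / r with hw1def
  set w2 : ℝ := 1 / r with hw2def
  have hw1 : 0 < w1 := div_pos (by linarith) hr0
  have hw2 : 0 < w2 := div_pos one_pos hr0
  have hw : w1 + w2 = 1 := by rw [hw1def, hw2def]; field_simp; ring
  set α : ℝ := (r - 1) / (2 * r) with hαdef
  set β : ℝ := 1 / (2 * r) with hβdef
  have hα : 0 < α := div_pos (by linarith) (by linarith)
  have hβ : 0 < β := div_pos one_pos (by linarith)
  have hαw : α = w1 * (1/2) := by rw [hαdef, hw1def]; ring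
  have hβw : β = w2 * (1/2) := by rw [hβdef, hw2def]; ring
  set M : ℝ := w1 ^ α * w2 ^ β with hMdef
  have hM : 0 < M := mul_pos (Real.rpow_pos_of_pos hw1 _) (Real.rpow_pos_of_pos hw2 _)
  set Lm : ℝ := α * Real.log w1 + β * Real.log w2 with hLmdef
  have hlogM : Real.log M = Lm := by
    rw [hMdef, Real.log_mul (Real.rpow_pos_of_pos hw1 _).ne' (Real.rpow_pos_of_pos hw2 _).ne',
      Real.log_rpow hw1, Real.log_rpow hw2]
  -- key pointwise bound
  have hkey : ∀ t ∈ Set.Icc (0:ℝ) 1, t ^ α * (1 - t) ^ β ≤ M := by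
    intro t ht
    have h1t : (0:ℝ) ≤ 1 - t := by linarith [ht.2]
    have hamgm := Real.geom_mean_le_arith_mean2_weighted hw1.le hw2.le
      (div_nonneg ht.1 hw1.le) (div_nonneg h1t hw2.le) hw
    rw [Real.div_rpow ht.1 hw1.le, Real.div_rpow h1t hw2.le] at hamgm
    have hrhs : w1 * (t / w1) + w2 * ((1 - t) / w2) = 1 := by field_simp; ring
    rw [hrhs, div_mul_div_comm, div_le_one (mul_pos (Real.rpow_pos_of_pos hw1 _)
      (Real.rpow_pos_of_pos hw2 _))] at hamgm
    have : t ^ α * (1 - t) ^ β = (t ^ w1 * (1 - t) ^ w2) ^ (1/2 : ℝ) := by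
      rw [hαw, hβw, Real.rpow_mul ht.1, Real.rpow_mul h1t,
        ← Real.mul_rpow (Real.rpow_nonneg ht.1 _) (Real.rpow_nonneg h1t _)]
    rw [this, hMdef]
    have : w1 ^ α * w2 ^ β = (w1 ^ w1 * w2 ^ w2) ^ (1/2 : ℝ) := by
      rw [hαw, hβw, Real.rpow_mul hw1.le, Real.rpow_mul hw2.le,
        ← Real.mul_rpow (Real.rpow_nonneg hw1.le _) (Real.rpow_nonneg hw2.le _)]
    rw [this]
    exact Real.rpow_le_rpow (mul_nonneg (Real.rpow_nonneg ht.1 _) (Real.rpow_nonneg h1t _))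
      hamgm (by norm_num)
  set B : ℝ → ℝ := fun N => ∫ t in (0:ℝ)..1, t ^ (N / (2 * r) * (r - 1)) * (1 - t) ^ (N / (2 * r))
    with hBdef
  -- continuity of integrand
  have hcont : ∀ N : ℝ, 0 < N →
      Continuous (fun t : ℝ => t ^ (N / (2 * r) * (r - 1)) * (1 - t) ^ (N / (2 * r))) := by
    intro N hN
    have he1 : 0 < N / (2 * r) * (r - 1) := mul_pos (div_pos hN (by linarith)) (by linarith)
    have he2 : 0 < N / (2 * r) := div_pos hN (by linarith)
    have c1 : Continuous fun t : ℝ => t ^ (N / (2 * r) * (r - 1)) := by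
      rw [continuous_iff_continuousAt]
      exact fun x => Real.continuousAt_rpow_const x _ (Or.inr he1.le)
    have c2 : Continuous fun t : ℝ => t ^ (N / (2 * r)) := by
      rw [continuous_iff_continuousAt]
      exact fun x => Real.continuousAt_rpow_const x _ (Or.inr he2.le)
    exact c1.mul (c2.comp (continuous_const.sub continuous_id))
  have hBint : ∀ N : ℝ, 0 < N → IntervalIntegrable
      (fun t : ℝ => t ^ (N / (2 * r) * (r - 1)) * (1 - t) ^ (N / (2 * r))) MeasureTheory.volume 0 1 :=
    fun N hN => (hcont N hN).intervalIntegrable 0 1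
  have hBpos : ∀ N : ℝ, 0 < N → 0 < B N := by
    intro N hN
    refine intervalIntegral.intervalIntegral_pos_of_pos_on (hBint N hN) (fun x hx => ?_) one_pos
    exact mul_pos (Real.rpow_pos_of_pos hx.1 _) (Real.rpow_pos_of_pos (by linarith [hx.2]) _)
  -- upper bound
  have hBupper : ∀ N : ℝ, 0 < N → B N ≤ M ^ N := by
    intro N hN
    have hb : ∀ x ∈ Set.Icc (0:ℝ) 1,
        x ^ (N / (2 * r) * (r - 1)) * (1 - x) ^ (N / (2 * r)) ≤ M ^ N := by
      intro x hx
      have h1x : (0:ℝ) ≤ 1 - x := by linarith [hx.2]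
      have e1 : N / (2 * r) * (r - 1) = α * N := by rw [hαdef]; ring
      have e2 : N / (2 * r) = β * N := by rw [hβdef]; ring
      rw [e1, e2, Real.rpow_mul hx.1, Real.rpow_mul h1x,
        ← Real.mul_rpow (Real.rpow_nonneg hx.1 _) (Real.rpow_nonneg h1x _)]
      exact Real.rpow_le_rpow (mul_nonneg (Real.rpow_nonneg hx.1 _) (Real.rpow_nonneg h1x _))
        (hkey x hx) hN.le
    calc B N ≤ ∫ _ in (0:ℝ)..1, M ^ N :=
          intervalIntegral.integral_mono_on zero_le_one (hBint N hN)
            intervalIntegrable_const hb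
      _ = M ^ N := by simp
  -- lower bound
  have hBlower : ∀ N : ℝ, r < N →
      1 / N * (w1 ^ (α * N) * (w2 - 1 / N) ^ (β * N)) ≤ B N := by
    intro N hN
    have hN0 : 0 < N := lt_trans hr0 hN
    have hd : 0 < w2 - 1 / N := by
      rw [hw2def]
      have := one_div_lt_one_div_of_lt hr0 hN
      linarith
    have hsub : w1 + 1 / N ≤ 1 := by
      have h1 : 1 / N < 1 / r := one_div_lt_one_div_of_lt hr0 hN
      have : w1 + w2 = 1 := hw
      rw [hw2def] at this
      linarith
    have hstep1 : 1 / N * (w1 ^ (α * N) * (w2 - 1 / N) ^ (β * N)) ≤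
        ∫ t in w1..(w1 + 1 / N),
          t ^ (N / (2 * r) * (r - 1)) * (1 - t) ^ (N / (2 * r)) := by
      have hb : ∀ x ∈ Set.Icc w1 (w1 + 1 / N),
          w1 ^ (α * N) * (w2 - 1 / N) ^ (β * N) ≤
            x ^ (N / (2 * r) * (r - 1)) * (1 - x) ^ (N / (2 * r)) := by
        intro x hx
        have e1 : N / (2 * r) * (r - 1) = α * N := by rw [hαdef]; ring
        have e2 : N / (2 * r) = β * N := by rw [hβdef]; ring
        rw [e1, e2]
        have h1 : w1 ^ (α * N) ≤ x ^ (α * N) :=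
          Real.rpow_le_rpow hw1.le hx.1 (mul_pos hα hN0).le
        have h2 : (w2 - 1 / N) ^ (β * N) ≤ (1 - x) ^ (β * N) := by
          apply Real.rpow_le_rpow hd.le _ (mul_pos hβ hN0).le
          have := hx.2
          have hw' : w1 + w2 = 1 := hw
          linarith
        exact mul_le_mul h1 h2 (Real.rpow_nonneg hd.le _) (Real.rpow_nonneg
          (le_trans hw1.le hx.1) _)
      have hmono := intervalIntegral.integral_mono_on
        (le_add_of_nonneg_right (one_div_pos.mpr hN0).le)
        (intervalIntegrable_const (μ := MeasureTheory.volume))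
        ((hcont N hN0).intervalIntegrable _ _) hb
      calc 1 / N * (w1 ^ (α * N) * (w2 - 1 / N) ^ (β * N))
          = ∫ _ in w1..(w1 + 1 / N), w1 ^ (α * N) * (w2 - 1 / N) ^ (β * N) := by
            rw [intervalIntegral.integral_const, smul_eq_mul]; ring
        _ ≤ _ := hmono
    have hstep2 : (∫ t in w1..(w1 + 1 / N),
          t ^ (N / (2 * r) * (r - 1)) * (1 - t) ^ (N / (2 * r))) ≤ B N := by
      apply intervalIntegral.integral_mono_interval hw1.le (le_add_of_nonneg_right (one_div_pos.mpr hN0).le) hsub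
      · rw [Filter.EventuallyLE, MeasureTheory.ae_restrict_iff' measurableSet_Ioc]
        filter_upwards with x hx
        exact mul_nonneg (Real.rpow_nonneg hx.1.le _) (Real.rpow_nonneg (by linarith [hx.2]) _)
      · exact hBint N hN0
    linarith
  -- squeeze for g
  set g : ℝ → ℝ := fun N => 1 / N * Real.log ((N / 2 + 1) * B N) with hgdef
  have hgle : ∀ᶠ N in atTop, g N ≤ 1 / N * Real.log (N / 2 + 1) + Lm := by
    filter_upwards [eventually_gt_atTop (0:ℝ)] with N hN
    have hN2 : (0:ℝ) < N / 2 + 1 := by linarith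
    have hB := hBpos N hN
    rw [hgdef]
    simp only
    rw [Real.log_mul hN2.ne' hB.ne', mul_add]
    have h1 : Real.log (B N) ≤ N * Lm := by
      calc Real.log (B N) ≤ Real.log (M ^ N) :=
            Real.log_le_log hB (hBupper N hN)
        _ = N * Real.log M := Real.log_rpow hM N
        _ = N * Lm := by rw [hlogM]
    have h2 : 1 / N * Real.log (B N) ≤ Lm := by
      have := mul_le_mul_of_nonneg_left h1 (le_of_lt (one_div_pos.mpr hN))
      calc 1 / N * Real.log (B N) ≤ 1 / N * (N * Lm) := this
        _ = Lm := by field_simp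
    linarith
  have hgge : ∀ᶠ N in atTop, 1 / N * Real.log (N / 2 + 1) +
      (-(Real.log N) / N + α * Real.log w1 + β * Real.log (w2 - 1 / N)) ≤ g N := by
    filter_upwards [eventually_gt_atTop r] with N hN
    have hN0 : 0 < N := lt_trans hr0 hN
    have hN2 : (0:ℝ) < N / 2 + 1 := by linarith
    have hB := hBpos N hN0
    have hd : 0 < w2 - 1 / N := by
      rw [hw2def]
      have := one_div_lt_one_div_of_lt hr0 hN
      linarith
    have hLB : 0 < 1 / N * (w1 ^ (α * N) * (w2 - 1 / N) ^ (β * N)) := by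
      apply mul_pos (one_div_pos.mpr hN0)
      exact mul_pos (Real.rpow_pos_of_pos hw1 _) (Real.rpow_pos_of_pos hd _)
    have h1 : Real.log (1 / N * (w1 ^ (α * N) * (w2 - 1 / N) ^ (β * N))) ≤ Real.log (B N) :=
      Real.log_le_log hLB (hBlower N hN)
    have h2 : Real.log (1 / N * (w1 ^ (α * N) * (w2 - 1 / N) ^ (β * N))) =
        -(Real.log N) + (α * N * Real.log w1 + β * N * Real.log (w2 - 1 / N)) := by
      rw [Real.log_mul (one_div_pos.mpr hN0).ne'
          (mul_pos (Real.rpow_pos_of_pos hw1 _) (Real.rpow_pos_of_pos hd _)).ne',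
        Real.log_mul (Real.rpow_pos_of_pos hw1 _).ne' (Real.rpow_pos_of_pos hd _).ne',
        Real.log_rpow hw1, Real.log_rpow hd, one_div, Real.log_inv]
    rw [h2] at h1
    have h3 : 1 / N * (-(Real.log N) + (α * N * Real.log w1 + β * N * Real.log (w2 - 1 / N))) ≤
        1 / N * Real.log (B N) :=
      mul_le_mul_of_nonneg_left h1 (le_of_lt (one_div_pos.mpr hN0))
    have h4 : 1 / N * (-(Real.log N) + (α * N * Real.log w1 + β * N * Real.log (w2 - 1 / N))) =
        -(Real.log N) / N + α * Real.log w1 + β * Real.log (w2 - 1 / N) := by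
      field_simp
      ring
    rw [hgdef]
    simp only
    rw [Real.log_mul hN2.ne' hB.ne', mul_add]
    rw [h4] at h3
    linarith
  -- limits of the bounding functions
  have hlog1 : Tendsto (fun N : ℝ => 1 / N * Real.log (N / 2 + 1)) atTop (nhds 0) := by
    have hc : Tendsto (fun N : ℝ => N / 2 + 1) atTop atTop :=
      tendsto_atTop_add_const_right _ 1 (tendsto_id.atTop_div_const two_pos)
    have := (Real.tendsto_pow_log_div_mul_add_atTop 2 (-2) 1 two_ne_zero).comp hc
    refine this.congr (fun N => ?_)
    simp only [Function.comp]
    rw [pow_one]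
    ring_nf
  have hlog2 : Tendsto (fun N : ℝ => -(Real.log N) / N) atTop (nhds 0) := by
    have := (Real.tendsto_pow_log_div_mul_add_atTop 1 0 1 one_ne_zero).neg
    rw [neg_zero] at this
    refine this.congr (fun N => ?_)
    rw [pow_one]
    ring
  have hlog3 : Tendsto (fun N : ℝ => β * Real.log (w2 - 1 / N)) atTop
      (nhds (β * Real.log w2)) := by
    apply Tendsto.const_mul
    have hsub : Tendsto (fun N : ℝ => w2 - 1 / N) atTop (nhds w2) := by
      have : Tendsto (fun N : ℝ => 1 / N) atTop (nhds 0) := by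
        simpa only [one_div] using tendsto_inv_atTop_zero
      simpa using tendsto_const_nhds.sub this
    exact ((Real.continuousAt_log hw2.ne').tendsto.comp hsub)
  have hlower : Tendsto (fun N : ℝ => 1 / N * Real.log (N / 2 + 1) +
      (-(Real.log N) / N + α * Real.log w1 + β * Real.log (w2 - 1 / N))) atTop (nhds Lm) := by
    have := hlog1.add (((hlog2.add (tendsto_const_nhds (x := α * Real.log w1))).add hlog3))
    simp only [zero_add, add_zero] at this
    rw [hLmdef]
    exact this
  have hupper : Tendsto (fun N : ℝ => 1 / N * Real.log (N / 2 + 1) + Lm) atTop (nhds Lm) := by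
    have := hlog1.add (tendsto_const_nhds (x := Lm))
    simpa using this
  have hg : Tendsto g atTop (nhds Lm) :=
    tendsto_of_tendsto_of_tendsto_of_le_of_le' hlower hupper hgge hgle
  -- conclude
  have hexp : Tendsto (fun N : ℝ => Real.exp (-(2 * r) * g N)) atTop
      (nhds (Real.exp (-(2 * r) * Lm))) :=
    (Real.continuous_exp.tendsto _).comp (hg.const_mul (-(2 * r)))
  have hval : Real.exp (-(2 * r) * Lm) = r * (1 - 1 / r) ^ (1 - r) := by
    have hw1' : (0:ℝ) < 1 - 1 / r := by
      have : w1 = 1 - 1 / r := by rw [hw1def]; field_simp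
      rw [← this]; exact hw1
    have he : -(2 * r) * Lm = (1 - r) * Real.log w1 + -(Real.log w2) := by
      rw [hLmdef, hαdef, hβdef]; field_simp; ring
    rw [he, Real.exp_add, Real.exp_neg, Real.exp_log hw2]
    have hw1e : w1 = 1 - 1 / r := by rw [hw1def]; field_simp
    have hexp1 : Real.exp ((1 - r) * Real.log w1) = w1 ^ (1 - r) := by
      rw [Real.rpow_def_of_pos hw1, mul_comm]
    rw [hexp1, ← hw1e, show w2⁻¹ = r by rw [hw2def, one_div, inv_inv]]
    ring
  rw [← hval]
  refine hexp.congr' ?_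
  filter_upwards [eventually_gt_atTop (0:ℝ)] with N hN
  have hN2 : (0:ℝ) < N / 2 + 1 := by linarith
  have hB := hBpos N hN
  show Real.exp (-(2 * r) * g N) =
    (N / 2 + 1) ^ (-(2 * r) / N) * (B N) ^ (-(2 * r) / N)
  rw [← Real.mul_rpow hN2.le hB.le, Real.rpow_def_of_pos (mul_pos hN2 hB), hgdef]
  congr 1
  ring
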